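/- Let Φ be a root system with base Δ in a real inner product space, α ∈ Δ, and λ' a vector satisfying ⟨λ', β∨⟩ ≤ 0 for all β ∈ Δ and ⟨λ', α∨⟩ = -1. Then for every positive root β ≠ α, one has ⟨λ', β∨⟩ ≤ -(1/2)⟨α, β∨⟩. -/

import Mathlib

/-- The pairing `⟨x, y∨⟩ = 2(x,y)/(y,y)` of a vector with the coroot of `y`. -/
noncomputable def coPair {V : Type*} [NormedAddCommGroup V] [InnerProductSpace ℝ V]
    (x y : V) : ℝ := 2 * (inner ℝ x y : ℝ) / (inner ℝ y y : ℝ)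

/-- Let `Δ` be a base of a root system (simple roots are nonzero and pairwise
non-positively correlated) and `α ∈ Δ`.  If `λ'` satisfies `⟨λ', γ∨⟩ ≤ 0` for all
`γ ∈ Δ` and `⟨λ', α∨⟩ = -1`, then every positive root `β ≠ α` (a nonnegative
integral combination of simple roots) satisfies `⟨λ', β∨⟩ ≤ -(1/2)⟨α, β∨⟩`. -/
theorem stmt6 {V : Type*} [NormedAddCommGroup V] [InnerProductSpace ℝ V]
    (Δ : Finset V) (α : V) (hαΔ : α ∈ Δ)
    (hΔ0 : ∀ γ ∈ Δ, γ ≠ 0)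
    (hneg : ∀ γ ∈ Δ, ∀ δ ∈ Δ, γ ≠ δ → (inner ℝ γ δ : ℝ) ≤ 0)
    (lam' : V)
    (h1 : ∀ γ ∈ Δ, coPair lam' γ ≤ 0)
    (h2 : coPair lam' α = -1)
    (β : V) (n : V → ℕ) (hβ : β = ∑ γ ∈ Δ, (n γ : ℝ) • γ)
    (hβ0 : β ≠ 0) (hβα : β ≠ α) :
    coPair lam' β ≤ -(1/2) * coPair α β := by
  have hββ : (0:ℝ) < inner ℝ β β := lt_of_le_of_ne real_inner_self_nonneg (fun h => hβ0 ((@inner_self_eq_zero ℝ _ _ _ _ β).mp h.symm))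
  have hαα : (0:ℝ) < inner ℝ α α := lt_of_le_of_ne real_inner_self_nonneg (fun h => hΔ0 α hαΔ ((@inner_self_eq_zero ℝ _ _ _ _ α).mp h.symm))
  -- key: 2(λ',β) + (α,β) ≤ 0
  have key : 2 * (inner ℝ lam' β : ℝ) + (inner ℝ α β : ℝ) ≤ 0 := by
    have hlb : (inner ℝ lam' β : ℝ) = ∑ γ ∈ Δ, (n γ : ℝ) * inner ℝ lam' γ := by
      rw [hβ, inner_sum]; simp [real_inner_smul_right]
    have hab : (inner ℝ α β : ℝ) = ∑ γ ∈ Δ, (n γ : ℝ) * inner ℝ α γ := by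
      rw [hβ, inner_sum]; simp [real_inner_smul_right]
    rw [hlb, hab, Finset.mul_sum, ← Finset.sum_add_distrib]
    apply Finset.sum_nonpos
    intro γ hγ
    have hγγ : (0:ℝ) < inner ℝ γ γ := lt_of_le_of_ne real_inner_self_nonneg (fun h => hΔ0 γ hγ ((@inner_self_eq_zero ℝ _ _ _ _ γ).mp h.symm))
    by_cases hc : γ = α
    · subst hc
      have hlg : 2 * (inner ℝ lam' γ : ℝ) = - (inner ℝ γ γ : ℝ) := by
        have h2' : 2 * (inner ℝ lam' γ : ℝ) / (inner ℝ γ γ : ℝ) = -1 := h2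
        field_simp at h2'
        linarith
      nlinarith [Nat.cast_nonneg (α := ℝ) (n γ)]
    · have hlγ : (inner ℝ lam' γ : ℝ) ≤ 0 := by
        have h1' : 2 * (inner ℝ lam' γ : ℝ) / (inner ℝ γ γ : ℝ) ≤ 0 := h1 γ hγ
        by_contra hpos
        push_neg at hpos
        have : 0 < 2 * (inner ℝ lam' γ : ℝ) / (inner ℝ γ γ : ℝ) :=
          div_pos (by linarith) hγγ
        linarith
      have hαγ : (inner ℝ α γ : ℝ) ≤ 0 := hneg α hαΔ γ hγ (fun h => hc h.symm)
      have hn : (0:ℝ) ≤ (n γ : ℝ) := Nat.cast_nonneg _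
      nlinarith
  -- conclude by dividing by (β,β) > 0
  unfold coPair
  have heq : -(1/2 : ℝ) * (2 * (inner ℝ α β : ℝ) / (inner ℝ β β : ℝ))
      = (-(inner ℝ α β : ℝ)) / (inner ℝ β β : ℝ) := by ring
  rw [heq, div_le_div_iff₀ hββ hββ]
  nlinarith
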